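/- arXiv:1506.04822 — 5 statements merged into one kernel-verified Lean document; each statement's English description precedes it below -/
import Mathlib

section
/- Let s ≥ 1 and let t₁,…,tₛ, a₁,…,aₛ be integers with tᵢ ≥ 1 and aᵢ ≥ tᵢ - 1 for all i, ∑tᵢ = n₁ and ∑aᵢ = n₂ where n₁ ≤ n₂. Fix an integer x with 1 ≤ x ≤ n₁ and suppose tᵢ < x for all i. Then it is impossible that for every choice of l and distinct indices h₁,…,h_l ∈ {1,…,s} satisfying t_{h₁}+⋯+t_{h_{l-1}} < x ≤ t_{h₁}+⋯+t_{h_l}, the inequality ∑_{i=1}^{l-1}(a_{h_i} - t_{h_i}) ≤ -1 holds. -/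
theorem key_combinatorial_lemma (s : ℕ) (hs : 1 ≤ s) (t a : ℕ → ℤ) (n₁ n₂ x : ℤ)
    (ht1 : ∀ i < s, 1 ≤ t i) (hat : ∀ i < s, t i - 1 ≤ a i)
    (hts : ∑ i ∈ Finset.range s, t i = n₁) (has : ∑ i ∈ Finset.range s, a i = n₂)
    (hn : n₁ ≤ n₂) (hx1 : 1 ≤ x) (hxn : x ≤ n₁) (htx : ∀ i < s, t i < x) :
    ¬ (∀ (l : ℕ) (h : ℕ → ℕ), 1 ≤ l → Set.InjOn h (Finset.range l) →
        (∀ i < l, h i < s) →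
        (∑ i ∈ Finset.range (l - 1), t (h i)) < x →
        x ≤ ∑ i ∈ Finset.range l, t (h i) →
        (∑ i ∈ Finset.range (l - 1), (a (h i) - t (h i))) ≤ -1) := by
  intro H
  set f : Fin s → ℤ := fun i => t i - a i with hf
  set σ := Tuple.sort f with hσ
  set h : ℕ → ℕ := fun i => if hi : i < s then ((σ ⟨i, hi⟩ : Fin s) : ℕ) else 0 with hh
  have hhs : ∀ i, i < s → h i < s := by
    intro i hi
    simp only [hh, dif_pos hi]
    exact (σ ⟨i, hi⟩).isLt
  have hheq : ∀ (i : Fin s), h i = (σ i : ℕ) := by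
    intro i
    simp only [hh, dif_pos i.isLt]
  have hinj : ∀ i j, i < s → j < s → h i = h j → i = j := by
    intro i j hi hj hij
    simp only [hh, dif_pos hi, dif_pos hj] at hij
    have := σ.injective (Fin.val_injective hij)
    exact congrArg Fin.val this
  have hsum : ∀ g : ℕ → ℤ, ∑ i ∈ Finset.range s, g (h i) = ∑ j ∈ Finset.range s, g j := by
    intro g
    rw [← Fin.sum_univ_eq_sum_range (fun i => g (h i)) s,
        ← Fin.sum_univ_eq_sum_range g s]
    rw [Fintype.sum_congr _ _ (fun i => by rw [hheq i])]
    exact Equiv.sum_comp σ (fun i : Fin s => g (i : ℕ))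
  have hanti : ∀ i j, i ≤ j → j < s → a (h j) - t (h j) ≤ a (h i) - t (h i) := by
    intro i j hij hj
    have hi : i < s := lt_of_le_of_lt hij hj
    have mono := Tuple.monotone_sort f (show (⟨i, hi⟩ : Fin s) ≤ ⟨j, hj⟩ from hij)
    simp only [Function.comp, hf] at mono
    have e1 : h i = ((σ ⟨i, hi⟩ : Fin s) : ℕ) := by simp only [hh, dif_pos hi]
    have e2 : h j = ((σ ⟨j, hj⟩ : Fin s) : ℕ) := by simp only [hh, dif_pos hj]
    rw [e1, e2]
    linarith [mono]
  -- find minimal l with x ≤ ∑_{i<l} t (h i)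
  have hPs : x ≤ ∑ i ∈ Finset.range s, t (h i) := by
    rw [hsum t, hts]; exact hxn
  classical
  let P : ℕ → Prop := fun l => x ≤ ∑ i ∈ Finset.range l, t (h i)
  have hex : ∃ l, P l := ⟨s, hPs⟩
  let l := Nat.find hex
  have hPl : P l := Nat.find_spec hex
  have hls : l ≤ s := Nat.find_le hPs
  have hl2 : 2 ≤ l := by
    by_contra hc
    push_neg at hc
    interval_cases l
    · have : P 0 := hPl
      simp only [P, Finset.range_zero, Finset.sum_empty] at this
      linarith
    · have : P 1 := hPl
      simp only [P, Finset.sum_range_one] at this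
      have := htx (h 0) (hhs 0 (by omega))
      linarith
  have hmin : ¬ P (l - 1) := Nat.find_min hex (by omega)
  simp only [P, not_le] at hmin
  have hS := H l h (by omega) (fun i hi j hj hij => by
      simp only [Finset.coe_range, Set.mem_Iio] at hi hj
      exact hinj i j (by omega) (by omega) hij)
    (fun i hi => hhs i (by omega)) hmin hPl
  -- key index
  have hl2s : l - 2 < s := by omega
  have hkey : a (h (l - 2)) - t (h (l - 2)) ≤ -1 := by
    by_contra hc
    push_neg at hc
    have hge : 0 ≤ a (h (l - 2)) - t (h (l - 2)) := by omega
    have : (0 : ℤ) ≤ ∑ i ∈ Finset.range (l - 1), (a (h i) - t (h i)) := by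
      apply Finset.sum_nonneg
      intro i hi
      simp only [Finset.mem_range] at hi
      have := hanti i (l - 2) (by omega) hl2s
      linarith
    linarith
  have hrest : ∑ i ∈ Finset.Ico (l - 1) s, (a (h i) - t (h i)) ≤ 0 := by
    apply Finset.sum_nonpos
    intro i hi
    simp only [Finset.mem_Ico] at hi
    have := hanti (l - 2) i (by omega) hi.2
    linarith
  have hsplit : ∑ i ∈ Finset.range (l - 1), (a (h i) - t (h i)) +
      ∑ i ∈ Finset.Ico (l - 1) s, (a (h i) - t (h i)) =
      ∑ i ∈ Finset.range s, (a (h i) - t (h i)) :=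
    Finset.sum_range_add_sum_Ico _ (by omega)
  have htotal : ∑ i ∈ Finset.range s, (a (h i) - t (h i)) = n₂ - n₁ := by
    rw [hsum (fun j => a j - t j), Finset.sum_sub_distrib, hts, has]
  omega
end

section
/- Let n₁ ≤ n₂ be positive integers and r a positive integer. Define Ψ(x) as the maximum over s ≥ 1 and integer sequences t₁,…,tₛ ≥ 1, a₁,…,aₛ with aᵢ ≥ tᵢ - 1, ∑tᵢ = n₁, ∑aᵢ = n₂, of the minimum over l and indices h₁,…,h_l with t_{h₁}+⋯+t_{h_{l-1}} < x ≤ t_{h₁}+⋯+t_{h_l} of xr + 1 - ∑_{i=1}^{l-1}(a_{h_i} - t_{h_i}). Then Ψ(x) = xr + 1 for all 1 ≤ x ≤ n₁. -/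
open Finset in
lemma prefix_nonneg (s k : ℕ) (f : ℕ → ℤ) (hk : k ≤ s)
    (hmono : ∀ i j, i ≤ j → j < s → f j ≤ f i)
    (htot : 0 ≤ ∑ i ∈ Finset.range s, f i) :
    0 ≤ ∑ i ∈ Finset.range k, f i := by
  by_contra hneg
  push_neg at hneg
  have hsplit : ∑ i ∈ range s, f i = (∑ i ∈ range k, f i) + ∑ i ∈ Ico k s, f i := by
    rw [← Finset.sum_range_add_sum_Ico f hk]
  have htail : 0 < ∑ i ∈ Ico k s, f i := by omega
  obtain ⟨j, hj, hjpos⟩ : ∃ j ∈ Ico k s, 0 < f j := by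
    by_contra hc
    push_neg at hc
    have : ∑ i ∈ Ico k s, f i ≤ 0 := Finset.sum_nonpos hc
    omega
  obtain ⟨i, hi, hineg⟩ : ∃ i ∈ range k, f i < 0 := by
    by_contra hc
    push_neg at hc
    have : 0 ≤ ∑ i ∈ range k, f i := Finset.sum_nonneg hc
    omega
  simp only [Finset.mem_Ico, Finset.mem_range] at hj hi
  have := hmono i j (by omega) hj.2
  omega

lemma sum_getD_eq (L : List ℕ) (g : ℕ → ℤ) :
    ∑ i ∈ Finset.range L.length, g (L.getD i 0) = (L.map g).sum := by
  induction L with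
  | nil => simp
  | cons x xs ih =>
    rw [List.length_cons, Finset.sum_range_succ']
    simp only [List.getD_cons_succ, List.getD_cons_zero, List.map_cons, List.sum_cons]
    rw [ih]; ring

lemma sum_range_eq_list (s : ℕ) (g : ℕ → ℤ) :
    ∑ i ∈ Finset.range s, g i = ((List.range s).map g).sum := by
  induction s with
  | zero => simp
  | succ n ih =>
    rw [Finset.sum_range_succ, List.range_succ, List.map_append, List.sum_append, ih]; simp

lemma sorted_perm_exists (s : ℕ) (t a : ℕ → ℤ) :
    ∃ h : ℕ → ℕ, Set.InjOn h (Finset.range s) ∧ (∀ i < s, h i < s) ∧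
      (∀ g : ℕ → ℤ, ∑ i ∈ Finset.range s, g (h i) = ∑ i ∈ Finset.range s, g i) ∧
      (∀ i j, i ≤ j → j < s → a (h j) - t (h j) ≤ a (h i) - t (h i)) := by
  classical
  set R : ℕ → ℕ → Prop := fun i j => a j - t j ≤ a i - t i with hR
  haveI : IsTotal ℕ R := ⟨fun i j => le_total _ _⟩
  haveI : IsTrans ℕ R := ⟨fun _ _ _ h1 h2 => le_trans h2 h1⟩
  have hperm : (List.insertionSort R (List.range s)).Perm (List.range s) :=
    List.perm_insertionSort R _
  set L := List.insertionSort R (List.range s) with hL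
  have hlen : L.length = s := by simpa using hperm.length_eq
  have hnodup : L.Nodup := hperm.nodup_iff.mpr List.nodup_range
  have hmem : ∀ i, i ∈ L ↔ i < s := by
    intro i; rw [hperm.mem_iff, List.mem_range]
  have hsorted : L.Pairwise R := List.pairwise_insertionSort R _
  refine ⟨fun i => L.getD i 0, ?_, ?_, ?_, ?_⟩
  · intro i hi j hj hij
    simp only [Finset.coe_range, Set.mem_Iio] at hi hj
    dsimp only at hij
    have hi' : i < L.length := by omega
    have hj' : j < L.length := by omega
    rw [List.getD_eq_getElem _ _ hi', List.getD_eq_getElem _ _ hj'] at hij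
    exact (List.Nodup.getElem_inj_iff hnodup).mp hij
  · intro i hi
    have hi' : i < L.length := by omega
    dsimp only
    rw [List.getD_eq_getElem _ _ hi']
    exact (hmem _).mp (L.getElem_mem hi')
  · intro g
    have h1 := sum_getD_eq L g
    rw [hlen] at h1
    rw [h1, sum_range_eq_list s g]
    exact (hperm.map g).sum_eq
  · intro i j hij hj
    rcases eq_or_lt_of_le hij with rfl | hlt
    · exact le_refl _
    · have hi' : i < L.length := by omega
      have hj' : j < L.length := by omega
      dsimp only
      rw [List.getD_eq_getElem _ _ hi', List.getD_eq_getElem _ _ hj']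
      have := hsorted.rel_get_of_lt (a := ⟨i, hi'⟩) (b := ⟨j, hj'⟩) hlt
      simpa [R, List.get_eq_getElem] using this


/-- The set of "inner" values `xr + 1 - ∑_{i=1}^{l-1}(a_{h_i} - t_{h_i})` over admissible
choices of `l` and distinct indices `h₁, …, h_l ∈ {0, …, s-1}` with
`t_{h₁} + ⋯ + t_{h_{l-1}} < x ≤ t_{h₁} + ⋯ + t_{h_l}`. -/
def innerVals (r x : ℤ) (s : ℕ) (t a : ℕ → ℤ) : Set ℤ :=
  {v | ∃ (l : ℕ) (h : ℕ → ℕ), 1 ≤ l ∧ Set.InjOn h (Finset.range l) ∧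
    (∀ i < l, h i < s) ∧
    (∑ i ∈ Finset.range (l - 1), t (h i)) < x ∧
    x ≤ (∑ i ∈ Finset.range l, t (h i)) ∧
    v = x * r + 1 - ∑ i ∈ Finset.range (l - 1), (a (h i) - t (h i))}

/-- The constraints on the parameters `s, t₁, …, tₛ, a₁, …, aₛ` of the integer program. -/
def validParams (n₁ n₂ : ℤ) (s : ℕ) (t a : ℕ → ℤ) : Prop :=
  1 ≤ s ∧ (∀ i < s, 1 ≤ t i) ∧ (∀ i < s, t i - 1 ≤ a i) ∧
    (∑ i ∈ Finset.range s, t i) = n₁ ∧ (∑ i ∈ Finset.range s, a i) = n₂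

/-- `Ψ(x) = xr + 1` when `n₁ ≤ n₂`: the maximum over valid parameters of the minimum of the
inner values is exactly `xr + 1`. -/
theorem psi_eq (n₁ n₂ r x : ℤ) (hn₁ : 0 < n₁) (hn : n₁ ≤ n₂) (hr : 0 < r)
    (hx1 : 1 ≤ x) (hxn : x ≤ n₁) :
    IsGreatest {v : ℤ | ∃ (s : ℕ) (t a : ℕ → ℤ),
      validParams n₁ n₂ s t a ∧ IsLeast (innerVals r x s t a) v} (x * r + 1) := by
  classical
  constructor
  · -- membership: take s = 1, t = n₁, a = n₂
    refine ⟨1, fun _ => n₁, fun _ => n₂,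
      ⟨le_refl 1, fun i _ => by show (1:ℤ) ≤ n₁; omega,
        fun i _ => by show n₁ - 1 ≤ n₂; omega, by simp, by simp⟩, ?_, ?_⟩
    · refine ⟨1, fun _ => 0, le_refl 1,
        fun i hi j hj _ => by
          simp only [Finset.coe_range, Set.mem_Iio, Nat.lt_one_iff] at hi hj; omega,
        fun i hi => by show (0:ℕ) < 1; omega, ?_, ?_, ?_⟩
      · simp; omega
      · simpa using hxn
      · simp
    · rintro w ⟨l, h, hl, hinj, hlt, _, _, hw⟩
      have hl1 : l = 1 := by
        by_contra hc
        have h2 : 2 ≤ l := by omega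
        have h0 : (0 : ℕ) ∈ (Finset.range l : Set ℕ) := by
          simp only [Finset.coe_range, Set.mem_Iio]; omega
        have h1' : (1 : ℕ) ∈ (Finset.range l : Set ℕ) := by
          simp only [Finset.coe_range, Set.mem_Iio]; omega
        have := hinj h0 h1' (by
          have := hlt 0 (by omega)
          have := hlt 1 (by omega)
          omega)
        omega
      subst hl1
      simp only [Nat.sub_self, Finset.range_zero, Finset.sum_empty, sub_zero] at hw
      omega
  · -- upper bound
    rintro v ⟨s, t, a, ⟨hs, ht, hta, hsumt, hsuma⟩, hvmem, hvlb⟩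
    obtain ⟨h, hinj, hlts, hsum, hmono⟩ := sorted_perm_exists s t a
    have hsum_t : ∑ i ∈ Finset.range s, t (h i) = n₁ := (hsum t).trans hsumt
    have hsum_f : ∑ i ∈ Finset.range s, (a (h i) - t (h i)) = n₂ - n₁ := by
      have := hsum (fun i => a i - t i)
      rw [this, Finset.sum_sub_distrib, hsumt, hsuma]
    have hex : ∃ l, x ≤ ∑ i ∈ Finset.range l, t (h i) := ⟨s, by omega⟩
    set l := Nat.find hex with hldef
    have hPl : x ≤ ∑ i ∈ Finset.range l, t (h i) := Nat.find_spec hex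
    have hl_le : l ≤ s := Nat.find_le (by omega)
    have hl1 : 1 ≤ l := by
      rcases Nat.eq_zero_or_pos l with h0 | h1
      · exfalso; rw [h0] at hPl; simp at hPl; omega
      · exact h1
    have hnot : ¬ x ≤ ∑ i ∈ Finset.range (l - 1), t (h i) :=
      Nat.find_min hex (by omega)
    push_neg at hnot
    have hw_mem : x * r + 1 - ∑ i ∈ Finset.range (l - 1), (a (h i) - t (h i)) ∈
        innerVals r x s t a := by
      refine ⟨l, h, hl1, hinj.mono ?_, fun i hi => hlts i (by omega), hnot, hPl, rfl⟩
      exact_mod_cast Finset.coe_subset.mpr (Finset.range_subset_range.mpr hl_le)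
    have h0 : 0 ≤ ∑ i ∈ Finset.range (l - 1), (a (h i) - t (h i)) :=
      prefix_nonneg s (l - 1) _ (by omega) hmono (by omega)
    have := hvlb hw_mem
    omega
end

section
/- Let F be a finite field, A ⊆ F finite, 𝒜 = {A₁,…,A_m} a partition of A, and let α₁,…,α_m be distinct elements of F. Let g be the unique polynomial of degree < |A| with g(a) = αᵢ for all a ∈ Aᵢ. Then the polynomials 1, g, g², …, g^{m-1} (reduced modulo h_A) are linearly independent over F and span the space F_𝒜[x] of polynomials of degree < |A| constant on every block; i.e., they form a basis of F_𝒜[x]. -/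
open Polynomial

theorem powers_of_g_basis (F : Type*) [Field F] [Fintype F] [DecidableEq F]
    (A : Finset F) (hA : A.Nonempty) (m : ℕ) (hm : 0 < m)
    (Ab : Fin m → Finset F)
    (hne : ∀ i, (Ab i).Nonempty)
    (hdisj : ∀ i j, i ≠ j → Disjoint (Ab i) (Ab j))
    (hunion : Finset.univ.biUnion Ab = A)
    (α : Fin m → F) (hα : Function.Injective α)
    (g : Polynomial F) (hgdeg : g.degree < (A.card : ℕ))
    (hgval : ∀ i, ∀ a ∈ Ab i, g.eval a = α i)
    (hAnn : Polynomial F) (hAnn_def : hAnn = ∏ a ∈ A, (X - C a)) :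
    LinearIndependent F (fun i : Fin m => (g ^ (i : ℕ)) % hAnn) ∧
    (∀ f : Polynomial F, f.degree < (A.card : ℕ) →
      (∀ i, ∀ a ∈ Ab i, ∀ b ∈ Ab i, f.eval a = f.eval b) →
      ∃ c : Fin m → F, f = ∑ i : Fin m, c i • ((g ^ (i : ℕ)) % hAnn)) := by
  have hmonic : hAnn.Monic := by
    rw [hAnn_def]; exact monic_prod_of_monic _ _ (fun a _ => monic_X_sub_C a)
  have hdegAnn : hAnn.degree = (A.card : ℕ) := by
    rw [hAnn_def, degree_prod]
    simp [degree_X_sub_C]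
  have hmod : ∀ p : Polynomial F, p % hAnn = p %ₘ hAnn :=
    fun p => (modByMonic_eq_mod p hmonic).symm
  have hAnn_eval : ∀ a ∈ A, hAnn.eval a = 0 := by
    intro a ha
    rw [hAnn_def, eval_prod]
    exact Finset.prod_eq_zero ha (by simp)
  have heval : ∀ (p : Polynomial F), ∀ a ∈ A, (p % hAnn).eval a = p.eval a := by
    intro p a ha
    rw [hmod, modByMonic_eq_sub_mul_div p hAnn]
    simp [hAnn_eval a ha]
  have hmemA : ∀ i, ∀ a ∈ Ab i, a ∈ A := by
    intro i a ha
    rw [← hunion]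
    exact Finset.mem_biUnion.mpr ⟨i, Finset.mem_univ i, ha⟩
  have heval_pow : ∀ (j : ℕ) (i : Fin m), ∀ a ∈ Ab i,
      ((g ^ j) % hAnn).eval a = α i ^ j := by
    intro j i a ha
    rw [heval _ a (hmemA i a ha), eval_pow, hgval i a ha]
  have hdet : (Matrix.vandermonde α).det ≠ 0 :=
    Matrix.det_vandermonde_ne_zero_iff.mpr hα
  have hdeglt : ∀ p : Polynomial F, (p % hAnn).degree < (A.card : ℕ) := by
    intro p
    rw [hmod, ← hdegAnn]
    exact degree_modByMonic_lt p hmonic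
  constructor
  · rw [Fintype.linearIndependent_iff]
    intro c hc i
    have hmv : (Matrix.vandermonde α).mulVec c = 0 := by
      funext i
      obtain ⟨a, ha⟩ := hne i
      have := congrArg (Polynomial.eval a) hc
      simp only [eval_finset_sum, eval_smul, smul_eq_mul, eval_zero] at this
      rw [Finset.sum_congr rfl (fun j _ => by rw [heval_pow j i a ha])] at this
      simpa [Matrix.mulVec, Matrix.vandermonde, dotProduct, mul_comm] using this
    have := Matrix.eq_zero_of_mulVec_eq_zero hdet hmv
    exact congrFun this i
  · intro f hfdeg hfconst
    set β : Fin m → F := fun i => f.eval (hne i).choose with hβ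
    set c : Fin m → F := (Matrix.vandermonde α)⁻¹.mulVec β with hc
    have hsolve : (Matrix.vandermonde α).mulVec c = β := by
      rw [hc, Matrix.mulVec_mulVec, Matrix.mul_nonsing_inv _ (isUnit_iff_ne_zero.mpr hdet), Matrix.one_mulVec]
    refine ⟨c, ?_⟩
    set S : Polynomial F := ∑ i : Fin m, c i • ((g ^ (i : ℕ)) % hAnn) with hS
    have hSdeg : S.degree < (A.card : ℕ) := by
      refine lt_of_le_of_lt (degree_sum_le _ _) ?_
      rw [Finset.sup_lt_iff (by exact_mod_cast WithBot.bot_lt_coe _)]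
      intro i _
      exact lt_of_le_of_lt (degree_smul_le _ _) (hdeglt _)
    have hSeval : ∀ i, ∀ a ∈ Ab i, S.eval a = β i := by
      intro i a ha
      have h1 : S.eval a = ∑ j : Fin m, c j * α i ^ (j : ℕ) := by
        rw [hS, eval_finset_sum]
        exact Finset.sum_congr rfl (fun j _ => by
          rw [eval_smul, smul_eq_mul, heval_pow _ i a ha])
      have h2 := congrFun hsolve i
      simp only [Matrix.mulVec, Matrix.vandermonde, dotProduct] at h2
      rw [h1, Finset.sum_congr rfl (fun j _ => mul_comm (c j) _)]
      exact h2
    have hzero : f - S = 0 := by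
      by_cases h : f - S = 0
      · exact h
      refine eq_zero_of_natDegree_lt_card_of_eval_eq_zero' _ A ?_ ?_
      · intro a ha
        obtain ⟨i, _, hai⟩ := Finset.mem_biUnion.mp (hunion ▸ ha)
        have hfa : f.eval a = β i := hfconst i a hai (hne i).choose (hne i).choose_spec
        rw [eval_sub, hfa, hSeval i a hai, sub_self]
      · have : (f - S).degree < (A.card : ℕ) :=
          lt_of_le_of_lt (degree_sub_le f S) (max_lt hfdeg hSdeg)
        exact (natDegree_lt_iff_degree_lt h).mpr this
    exact sub_eq_zero.mp hzero
end

section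
/- Let F be a field, A ⊆ F with |A| = n, partitioned into n₁ blocks A₁,…,A_{n₁} with |Aᵢ| = r for i < n₁ and |A_{n₁}| = s where 1 < s ≤ r. Let g ∈ F[x] with deg g = r be constant on each block and vanishing on A_{n₁}, and let h(x) = ∏_{a∈A_{n₁}}(x-a). For the encoding polynomial f_a(x) = ∑_{i=0}^{s-1}∑_{j=0}^{u} a_{i,j} g(x)ʲ xⁱ + ∑_{i=s}^{r-1}∑_{j=0}^{u-1} a_{i,j} g(x)ʲ x^{i-s} h(x), with k = ur + (s - u) coefficients (i.e., u + v = s with v = k - ur), we have deg f_a ≤ k + u - 1, and hence the evaluation code {(f_a(α))_{α∈A} : a ∈ F^k} has minimum distance d ≥ n - k - u + 1. -/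
open Polynomial Finset

theorem tamo_barg_modified (F : Type*) [Field F] [DecidableEq F]
    (A : Finset F) (n n₁ r s u k : ℕ)
    (hn : A.card = n) (hn₁ : 0 < n₁) (hr : 2 ≤ r) (hs1 : 1 < s) (hsr : s ≤ r)
    (hu : u ≤ s) (hk : k = u * r + (s - u))
    (Ab : Fin n₁ → Finset F) (Alast : Finset F)
    (hblocks_sub : ∀ i, Ab i ⊆ A)
    (hdisj : ∀ i j, i ≠ j → Disjoint (Ab i) (Ab j))
    (hunion : Finset.univ.biUnion Ab = A)
    (hcard : ∀ i : Fin n₁, (i : ℕ) + 1 < n₁ → (Ab i).card = r)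
    (hlast : ∀ i : Fin n₁, (i : ℕ) + 1 = n₁ → Ab i = Alast)
    (hcardlast : Alast.card = s)
    (g : Polynomial F) (hgdeg : g.natDegree = r) (hg0 : g ≠ 0)
    (hgconst : ∀ i : Fin n₁, ∀ a ∈ Ab i, ∀ b ∈ Ab i, g.eval a = g.eval b)
    (hgvanish : ∀ a ∈ Alast, g.eval a = 0)
    (h : Polynomial F) (hh : h = ∏ a ∈ Alast, (X - C a))
    (a : ℕ → ℕ → F) (fa : Polynomial F)
    (hfa : fa = (∑ i ∈ range s, ∑ j ∈ range (u + 1), C (a i j) * g ^ j * X ^ i) +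
      ∑ i ∈ Ico s r, ∑ j ∈ range u, C (a i j) * g ^ j * X ^ (i - s) * h) :
    fa.degree ≤ (k + u - 1 : ℕ) ∧
    ((∃ i < s, ∃ j < u + 1, a i j ≠ 0) ∨ (∃ i, s ≤ i ∧ i < r ∧ ∃ j < u, a i j ≠ 0) →
      ((A.filter fun α => fa.eval α ≠ 0).card : ℤ) ≥ (n : ℤ) - k - u + 1) := by
  -- basic facts about h
  have hmonic_h : h.Monic := by
    rw [hh]; exact monic_prod_of_monic _ _ fun a _ => monic_X_sub_C a
  have hh0 : h ≠ 0 := hmonic_h.ne_zero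
  have hhdeg : h.natDegree = s := by
    rw [hh, natDegree_prod _ _ fun a _ => X_sub_C_ne_zero a]
    simp [hcardlast]
  have hlcg : g.leadingCoeff ≠ 0 := leadingCoeff_ne_zero.mpr hg0
  -- reformulate fa as a single sum
  set D : Finset (ℕ × ℕ) := (range s ×ˢ range (u+1)) ∪ ((Ico s r) ×ˢ range u) with hD
  set T : ℕ × ℕ → Polynomial F := fun p =>
    if p.1 < s then C (a p.1 p.2) * g ^ p.2 * X ^ p.1
    else C (a p.1 p.2) * g ^ p.2 * X ^ (p.1 - s) * h with hT
  have hdisjD : Disjoint ((range s ×ˢ range (u+1))) ((Ico s r) ×ˢ range u) := by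
    simp only [Finset.disjoint_left]
    rintro ⟨i, j⟩ hm hm'
    simp only [Finset.mem_product, Finset.mem_range, Finset.mem_Ico] at hm hm'
    omega
  have hfaD : fa = ∑ p ∈ D, T p := by
    rw [hfa, hD, Finset.sum_union hdisjD]
    congr 1
    · rw [Finset.sum_product]
      refine Finset.sum_congr rfl fun i hi => Finset.sum_congr rfl fun j hj => ?_
      simp only [hT]
      rw [if_pos (mem_range.mp hi)]
    · rw [Finset.sum_product]
      refine Finset.sum_congr rfl fun i hi => Finset.sum_congr rfl fun j hj => ?_
      simp only [hT]
      rw [if_neg (by simp only [mem_Ico] at hi; omega)]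
  -- degree bounds on terms
  have hTdeg_le : ∀ p : ℕ × ℕ, ¬ p.1 < s → s ≤ p.1 → True := fun _ _ _ => trivial
  have hTdeg : ∀ p : ℕ × ℕ, s ≤ p.1 ∨ True → (T p).natDegree ≤ p.2 * r + p.1 := by
    intro p _
    have hgp : (g ^ p.2).natDegree ≤ p.2 * r := by
      calc (g ^ p.2).natDegree ≤ p.2 * g.natDegree := natDegree_pow_le
        _ = p.2 * r := by rw [hgdeg]
    by_cases hp : p.1 < s
    · simp only [hT, if_pos hp]
      calc (C (a p.1 p.2) * g ^ p.2 * X ^ p.1).natDegree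
          ≤ (C (a p.1 p.2) * g ^ p.2).natDegree + (X ^ p.1 : Polynomial F).natDegree :=
            natDegree_mul_le
        _ ≤ ((C (a p.1 p.2)).natDegree + (g ^ p.2).natDegree) + p.1 := by
            rw [natDegree_X_pow]; exact Nat.add_le_add_right natDegree_mul_le _
        _ ≤ p.2 * r + p.1 := by
            rw [natDegree_C]; omega
    · simp only [hT, if_neg hp]
      push_neg at hp
      calc (C (a p.1 p.2) * g ^ p.2 * X ^ (p.1 - s) * h).natDegree
          ≤ (C (a p.1 p.2) * g ^ p.2 * X ^ (p.1 - s)).natDegree + h.natDegree :=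
            natDegree_mul_le
        _ ≤ ((C (a p.1 p.2) * g ^ p.2).natDegree + (X ^ (p.1 - s) : Polynomial F).natDegree) + s := by
            rw [hhdeg]; exact Nat.add_le_add_right natDegree_mul_le _
        _ ≤ (((C (a p.1 p.2)).natDegree + (g ^ p.2).natDegree) + (p.1 - s)) + s := by
            rw [natDegree_X_pow]
            exact Nat.add_le_add_right (Nat.add_le_add_right natDegree_mul_le _) _
        _ ≤ p.2 * r + p.1 := by
            rw [natDegree_C]; omega
  -- bound on p.2 * r + p.1 for p in D
  have hDbound : ∀ p ∈ D, p.2 * r + p.1 ≤ u * r + s - 1 := by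
    rintro ⟨i, j⟩ hp
    rw [hD, mem_union, mem_product, mem_product, mem_range, mem_range, mem_range, mem_Ico] at hp
    rcases hp with ⟨hi, hj⟩ | ⟨hi, hj⟩
    · have : j * r ≤ u * r := Nat.mul_le_mul_right r (by omega)
      simp only; omega
    · have : j * r + r ≤ u * r := by
        have h1 : (j + 1) * r ≤ u * r := Nat.mul_le_mul_right r (by omega)
        rw [Nat.add_mul, one_mul] at h1
        exact h1
      simp only; omega
  have hkus : k + u - 1 = u * r + s - 1 := by
    have : u ≤ s := hu
    omega
  have hnatdeg : fa.natDegree ≤ k + u - 1 := by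
    rw [hfaD, hkus]
    refine natDegree_sum_le_of_forall_le _ _ fun p hp => ?_
    exact (hTdeg p (Or.inr trivial)).trans (hDbound p hp)
  have hdeg : fa.degree ≤ (k + u - 1 : ℕ) :=
    degree_le_natDegree.trans (by exact_mod_cast hnatdeg)
  refine ⟨hdeg, ?_⟩
  intro hne
  -- membership implies first coordinate < r
  have hDfst : ∀ p ∈ D, p.1 < r := by
    rintro ⟨i, j⟩ hp
    rw [hD, mem_union, mem_product, mem_product, mem_range, mem_Ico] at hp
    rcases hp with ⟨hi, _⟩ | ⟨hi, _⟩ <;> omega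
  -- exact coefficient at the top degree of a term
  have hTcoeff : ∀ p ∈ D, a p.1 p.2 ≠ 0 → (T p).coeff (p.2 * r + p.1) ≠ 0 := by
    rintro ⟨i, j⟩ hpD hne0
    have hXne : ∀ m : ℕ, (X ^ m : Polynomial F) ≠ 0 := fun m => pow_ne_zero m X_ne_zero
    by_cases hp : i < s
    · have hdegeq : (C (a i j) * g ^ j * X ^ i).natDegree = j * r + i := by
        rw [natDegree_mul (mul_ne_zero (C_ne_zero.mpr hne0) (pow_ne_zero j hg0)) (hXne i),
          natDegree_mul (C_ne_zero.mpr hne0) (pow_ne_zero j hg0),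
          natDegree_C, natDegree_pow, natDegree_X_pow, hgdeg]
        ring
      simp only [hT, if_pos hp]
      rw [← hdegeq, coeff_natDegree]
      rw [leadingCoeff_mul, leadingCoeff_mul, leadingCoeff_C, leadingCoeff_pow,
        leadingCoeff_X_pow]
      exact mul_ne_zero (mul_ne_zero hne0 (pow_ne_zero j hlcg)) one_ne_zero
    · have hsi : s ≤ i := by omega
      have hdegeq : (C (a i j) * g ^ j * X ^ (i - s) * h).natDegree = j * r + i := by
        rw [natDegree_mul (mul_ne_zero (mul_ne_zero (C_ne_zero.mpr hne0) (pow_ne_zero j hg0))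
            (hXne (i - s))) hh0,
          natDegree_mul (mul_ne_zero (C_ne_zero.mpr hne0) (pow_ne_zero j hg0)) (hXne (i - s)),
          natDegree_mul (C_ne_zero.mpr hne0) (pow_ne_zero j hg0),
          natDegree_C, natDegree_pow, natDegree_X_pow, hgdeg, hhdeg]
        omega
      simp only [hT, if_neg hp]
      rw [← hdegeq, coeff_natDegree]
      rw [leadingCoeff_mul, leadingCoeff_mul, leadingCoeff_mul, leadingCoeff_C,
        leadingCoeff_pow, leadingCoeff_X_pow, hmonic_h.leadingCoeff]
      exact mul_ne_zero (mul_ne_zero (mul_ne_zero hne0 (pow_ne_zero j hlcg)) one_ne_zero)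
        one_ne_zero
  -- injectivity of degrees
  have hinj : ∀ p q : ℕ × ℕ, p.1 < r → q.1 < r → p.2 * r + p.1 = q.2 * r + q.1 → p = q := by
    rintro ⟨i, j⟩ ⟨i', j'⟩ hi hi' heq
    simp only at hi hi' heq
    have h1 : (j * r + i) % r = i := by
      rw [mul_comm j r, Nat.mul_add_mod, Nat.mod_eq_of_lt hi]
    have h2 : (j' * r + i') % r = i' := by
      rw [mul_comm j' r, Nat.mul_add_mod, Nat.mod_eq_of_lt hi']
    have hii : i = i' := by rw [← h1, ← h2, heq]
    have hjj : j = j' := by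
      have hr0 : 0 < r := by omega
      have : j * r = j' * r := by omega
      exact Nat.eq_of_mul_eq_mul_right hr0 this
    simp [hii, hjj]
  -- the set of nonzero coefficients is nonempty
  have hSne : ∃ p ∈ D.filter (fun p => a p.1 p.2 ≠ 0), True := by
    rcases hne with ⟨i, hi, j, hj, hij⟩ | ⟨i, hsi, hir, j, hj, hij⟩
    · exact ⟨(i, j), mem_filter.mpr ⟨mem_union.mpr (Or.inl (mem_product.mpr
        ⟨mem_range.mpr hi, mem_range.mpr hj⟩)), hij⟩, trivial⟩
    · exact ⟨(i, j), mem_filter.mpr ⟨mem_union.mpr (Or.inr (mem_product.mpr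
        ⟨mem_Ico.mpr ⟨hsi, hir⟩, mem_range.mpr hj⟩)), hij⟩, trivial⟩
  obtain ⟨p₁, hp₁, -⟩ := hSne
  have hSnonempty : (D.filter (fun p => a p.1 p.2 ≠ 0)).Nonempty := ⟨p₁, hp₁⟩
  obtain ⟨p₀, hp₀S, hp₀max⟩ := Finset.exists_max_image (D.filter (fun p => a p.1 p.2 ≠ 0))
    (fun p => p.2 * r + p.1) hSnonempty
  have hp₀D : p₀ ∈ D := (mem_filter.mp hp₀S).1
  have hp₀ne : a p₀.1 p₀.2 ≠ 0 := (mem_filter.mp hp₀S).2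
  -- fa is nonzero
  have hfa0 : fa ≠ 0 := by
    have hcoeff : fa.coeff (p₀.2 * r + p₀.1) ≠ 0 := by
      rw [hfaD, finset_sum_coeff]
      rw [Finset.sum_eq_single p₀]
      · exact hTcoeff p₀ hp₀D hp₀ne
      · intro p hpD hpne
        by_cases hz : a p.1 p.2 = 0
        · have : T p = 0 := by
            simp only [hT]
            split <;> simp [hz]
          rw [this, coeff_zero]
        · have hpS : p ∈ D.filter (fun p => a p.1 p.2 ≠ 0) := mem_filter.mpr ⟨hpD, hz⟩
          have hle := hp₀max p hpS
          have hlt : p.2 * r + p.1 < p₀.2 * r + p₀.1 := by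
            rcases lt_or_eq_of_le hle with hlt | heq
            · exact hlt
            · exact absurd (hinj p p₀ (hDfst p hpD) (hDfst p₀ hp₀D) heq) hpne
          exact coeff_eq_zero_of_natDegree_lt ((hTdeg p (Or.inr trivial)).trans_lt hlt)
      · intro habs; exact absurd hp₀D habs
    intro h0
    rw [h0, coeff_zero] at hcoeff
    exact hcoeff rfl
  -- counting roots
  have hroots : (A.filter fun α => fa.eval α = 0).card ≤ k + u - 1 := by
    calc (A.filter fun α => fa.eval α = 0).card
        ≤ fa.roots.toFinset.card := Finset.card_le_card (by
          intro x hx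
          rw [mem_filter] at hx
          rw [Multiset.mem_toFinset, mem_roots hfa0]
          exact hx.2)
      _ ≤ Multiset.card fa.roots := fa.roots.toFinset_card_le
      _ ≤ fa.natDegree := fa.card_roots'
      _ ≤ k + u - 1 := hnatdeg
  have hsplit : (A.filter fun α => fa.eval α = 0).card
      + (A.filter fun α => ¬ fa.eval α = 0).card = A.card :=
    Finset.card_filter_add_card_filter_not _
  have hk1 : 1 ≤ k + u := by
    rcases Nat.eq_zero_or_pos u with hu0 | hu0
    · omega
    · have : 1 * 1 ≤ u * r := Nat.mul_le_mul hu0 (by omega)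
      omega
  have hne_eq : (A.filter fun α => fa.eval α ≠ 0) = (A.filter fun α => ¬ fa.eval α = 0) := rfl
  rw [hne_eq]
  rw [hn] at hsplit
  omega
end

section
/- For positive integers r ≥ 2, t ≥ 1, the product ∏_{i=1}^{t} 1/(1 + 1/(i r)) satisfies r/(r+t) ≤ ∏_{i=1}^{t} 1/(1 + 1/(ir)), with equality if and only if t = 1. -/
private lemma rate_aux (r : ℚ) (hr : 2 ≤ r) :
    ∀ t : ℕ, 1 ≤ t →
    (r / (r + t) ≤ ∏ i ∈ Finset.Icc 1 t, 1 / (1 + 1 / ((i : ℚ) * r))) ∧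
    (2 ≤ t → r / (r + t) < ∏ i ∈ Finset.Icc 1 t, 1 / (1 + 1 / ((i : ℚ) * r))) := by
  intro t ht
  induction t, ht using Nat.le_induction with
  | base =>
    constructor
    · apply le_of_eq
      simp only [Finset.Icc_self, Finset.prod_singleton, Nat.cast_one]
      field_simp
    · omega
  | succ n hn ih =>
    have hpos : (0:ℚ) < r := by linarith
    have hn1 : (1:ℚ) ≤ (n:ℚ) := by exact_mod_cast hn
    have hfn : (0:ℚ) < 1 + 1 / (((n:ℚ)+1) * r) := by positivity
    have hprod : ∏ i ∈ Finset.Icc 1 (n+1), 1 / (1 + 1 / ((i : ℚ) * r))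
        = (∏ i ∈ Finset.Icc 1 n, 1 / (1 + 1 / ((i : ℚ) * r)))
          * (1 / (1 + 1 / (((n:ℚ)+1) * r))) := by
      rw [Finset.prod_Icc_succ_top (by omega : 1 ≤ n + 1)]
      push_cast
      ring_nf
      simp only [mul_comm]
    have hstep : r / (r + ((n:ℚ)+1)) < (r / (r + n)) * (1 / (1 + 1 / (((n:ℚ)+1) * r))) := by
      have hrw : 1 / (1 + 1 / (((n:ℚ)+1) * r)) = (((n:ℚ)+1) * r) / (((n:ℚ)+1) * r + 1) := by
        rw [one_div, one_div, inv_eq_iff_eq_inv, inv_div]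
        field_simp
      rw [hrw, div_mul_div_comm, div_lt_div_iff₀ (by linarith) (by positivity)]
      nlinarith [mul_pos hpos (mul_pos (show (0:ℚ) < (n:ℚ) by linarith) (show (0:ℚ) < r - 1 by linarith))]
    have hch : r / (r + ((n:ℚ)+1)) < ∏ i ∈ Finset.Icc 1 (n+1), 1 / (1 + 1 / ((i : ℚ) * r)) := by
      rw [hprod]
      calc r / (r + ((n:ℚ)+1)) < (r / (r + n)) * (1 / (1 + 1 / (((n:ℚ)+1) * r))) := hstep
        _ ≤ (∏ i ∈ Finset.Icc 1 n, 1 / (1 + 1 / ((i : ℚ) * r)))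
              * (1 / (1 + 1 / (((n:ℚ)+1) * r))) := by
            apply mul_le_mul_of_nonneg_right ih.1 (by positivity)
    have hcast : ((n+1:ℕ):ℚ) = (n:ℚ) + 1 := by push_cast; ring
    rw [hcast]
    exact ⟨le_of_lt hch, fun _ => hch⟩

theorem rate_product_bound (r t : ℕ) (hr : 2 ≤ r) (ht : 1 ≤ t) :
    (r : ℚ) / ((r : ℚ) + t) ≤ ∏ i ∈ Finset.Icc 1 t, 1 / (1 + 1 / ((i : ℚ) * r)) ∧
    ((r : ℚ) / ((r : ℚ) + t) = ∏ i ∈ Finset.Icc 1 t, 1 / (1 + 1 / ((i : ℚ) * r)) ↔ t = 1) := by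
  have hrq : (2:ℚ) ≤ (r:ℚ) := by exact_mod_cast hr
  obtain ⟨h1, h2⟩ := rate_aux (r:ℚ) hrq t ht
  refine ⟨h1, ?_, ?_⟩
  · intro heq
    by_contra hne
    exact absurd heq (ne_of_lt (h2 (by omega)))
  · rintro rfl
    simp only [Finset.Icc_self, Finset.prod_singleton, Nat.cast_one]
    field_simp
end
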